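/- For any seminormal quasi-crystals Q and Q' of the same type Φ, the tensor product Q ⊗ Q' (with the structure maps defined below on Q × Q') satisfies all the axioms of a seminormal quasi-crystal of type Φ. -/

import Mathlib

/-! ## Root system setting -/

/-- The data of a root system `Φ` in a Euclidean space `V`, together with a choice of
simple roots `(α_i)_{i ∈ ι}` and a weight lattice `Λ`, with the integer-valued coroot
pairing `pair λ i = ⟨λ, α_i^∨⟩ = 2⟪λ, α_i⟫/⟪α_i, α_i⟫` on the weight lattice. -/
structure QCSetting (V : Type*) [NormedAddCommGroup V] [InnerProductSpace ℝ V]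
    (ι : Type*) where
  Φ : Set V
  finite : Φ.Finite
  nonempty : Φ.Nonempty
  zero_not_mem : (0 : V) ∉ Φ
  reflect_mem : ∀ a ∈ Φ, ∀ b ∈ Φ, b - (2 * (inner ℝ b a : ℝ) / (inner ℝ a a : ℝ)) • a ∈ Φ
  smul_root : ∀ a ∈ Φ, ∀ k : ℝ, k • a ∈ Φ → k = 1 ∨ k = -1
  simple : ι → V
  simple_mem : ∀ i, simple i ∈ Φ
  simple_indep : LinearIndependent ℝ simple
  Λ : AddSubgroup V
  lattice_spans : Submodule.span ℝ (Λ : Set V) = ⊤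
  root_mem_lattice : ∀ a ∈ Φ, a ∈ Λ
  pair : Λ → ι → ℤ
  pair_spec : ∀ (v : Λ) (i : ι),
    (pair v i : ℝ) = 2 * (inner ℝ (v : V) (simple i) : ℝ) / (inner ℝ (simple i) (simple i) : ℝ)

variable {V : Type*} [NormedAddCommGroup V] [InnerProductSpace ℝ V] {ι : Type*}

/-! ## Quasi-crystals -/

/-- The structure maps of a quasi-crystal of type `S` on an underlying set `Q`:
a weight map `wt` with values in the weight lattice, partial quasi-Kashiwara operators
`e i, f i : Q → Q ⊔ {⊥}` (realized as `Option`-valued maps, `none` playing the role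
of `⊥`), and maps `ε i, φ i : Q → ℤ ∪ {+∞}` (realized as `WithTop ℤ`). -/
structure QC (S : QCSetting V ι) (Q : Type*) where
  wt : Q → S.Λ
  e : ι → Q → Option Q
  f : ι → Q → Option Q
  ε : ι → Q → WithTop ℤ
  φ : ι → Q → WithTop ℤ

/-- `k`-fold iteration of a partial map `g : Q → Option Q` starting at `x`. -/
def optIter {Q : Type*} (g : Q → Option Q) (k : ℕ) (x : Q) : Option Q :=
  (fun o => o.bind g)^[k] (some x)

/-- The axioms of a seminormal quasi-crystal. -/
structure QC.IsSeminormal {S : QCSetting V ι} {Q : Type*} (𝒬 : QC S Q) : Prop where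
  phi_eq : ∀ i x, 𝒬.φ i x = 𝒬.ε i x + ((S.pair (𝒬.wt x) i : ℤ) : WithTop ℤ)
  wt_e : ∀ i x y, 𝒬.e i x = some y → (𝒬.wt y : V) = (𝒬.wt x : V) + S.simple i
  wt_f : ∀ i x y, 𝒬.f i x = some y → (𝒬.wt y : V) = (𝒬.wt x : V) - S.simple i
  e_iff_f : ∀ i x y, 𝒬.e i x = some y ↔ 𝒬.f i y = some x
  e_of_top : ∀ i x, 𝒬.ε i x = ⊤ → 𝒬.e i x = none
  f_of_top : ∀ i x, 𝒬.ε i x = ⊤ → 𝒬.f i x = none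
  eps_spec : ∀ i x, 𝒬.ε i x ≠ ⊤ → ∃ n : ℕ, 𝒬.ε i x = ((n : ℤ) : WithTop ℤ) ∧
    IsGreatest {k : ℕ | (optIter (𝒬.e i) k x).isSome} n
  phi_spec : ∀ i x, 𝒬.ε i x ≠ ⊤ → ∃ n : ℕ, 𝒬.φ i x = ((n : ℤ) : WithTop ℤ) ∧
    IsGreatest {k : ℕ | (optIter (𝒬.f i) k x).isSome} n

/-- A seminormal crystal is a seminormal quasi-crystal in which `ε i x ≠ +∞` always. -/
def QC.IsSeminormalCrystal {S : QCSetting V ι} {Q : Type*} (𝒬 : QC S Q) : Prop :=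
  𝒬.IsSeminormal ∧ ∀ i x, 𝒬.ε i x ≠ ⊤

/-! ## Tensor product -/

/-- The tensor product of two quasi-crystals of the same type. -/
noncomputable def QC.tensor {S : QCSetting V ι} {Q Q' : Type*} (𝒬 : QC S Q) (𝒬' : QC S Q') :
    QC S (Q × Q') where
  wt p := 𝒬.wt p.1 + 𝒬'.wt p.2
  ε i p := max (𝒬.ε i p.1) (𝒬'.ε i p.2 + ((-(S.pair (𝒬.wt p.1) i) : ℤ) : WithTop ℤ))
  φ i p := max (𝒬.φ i p.1 + ((S.pair (𝒬'.wt p.2) i : ℤ) : WithTop ℤ)) (𝒬'.φ i p.2)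
  e i p := if 𝒬'.ε i p.2 ≤ 𝒬.φ i p.1
    then (𝒬.e i p.1).map (fun y => (y, p.2))
    else (𝒬'.e i p.2).map (fun y => (p.1, y))
  f i p := if 𝒬'.ε i p.2 < 𝒬.φ i p.1
    then (𝒬.f i p.1).map (fun y => (y, p.2))
    else (𝒬'.f i p.2).map (fun y => (p.1, y))

/-! ## Quasi-tensor product -/

/-- The (inverse-free) quasi-tensor product of two quasi-crystals of the same type. -/
noncomputable def QC.qtensor {S : QCSetting V ι} {Q Q' : Type*} (𝒬 : QC S Q) (𝒬' : QC S Q') :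
    QC S (Q × Q') where
  wt p := 𝒬.wt p.1 + 𝒬'.wt p.2
  ε i p := if 0 < 𝒬.φ i p.1 ∧ 0 < 𝒬'.ε i p.2 then ⊤
    else max (𝒬.ε i p.1) (𝒬'.ε i p.2 + ((-(S.pair (𝒬.wt p.1) i) : ℤ) : WithTop ℤ))
  φ i p := if 0 < 𝒬.φ i p.1 ∧ 0 < 𝒬'.ε i p.2 then ⊤
    else max (𝒬.φ i p.1 + ((S.pair (𝒬'.wt p.2) i : ℤ) : WithTop ℤ)) (𝒬'.φ i p.2)
  e i p := if 0 < 𝒬.φ i p.1 ∧ 0 < 𝒬'.ε i p.2 then none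
    else if 𝒬'.ε i p.2 ≤ 𝒬.φ i p.1 then (𝒬.e i p.1).map (fun y => (y, p.2))
    else (𝒬'.e i p.2).map (fun y => (p.1, y))
  f i p := if 0 < 𝒬.φ i p.1 ∧ 0 < 𝒬'.ε i p.2 then none
    else if 𝒬'.ε i p.2 < 𝒬.φ i p.1 then (𝒬.f i p.1).map (fun y => (y, p.2))
    else (𝒬'.f i p.2).map (fun y => (p.1, y))

/-! ## Homomorphisms -/

/-- A quasi-crystal homomorphism `ψ : 𝒬 → 𝒬'`, i.e. a map `Q ⊔ {⊥} → Q' ⊔ {⊥}`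
(realized on `Option`s, `none` playing the role of `⊥`) compatible with the structure
maps in the appropriate sense. -/
structure QCHom {S : QCSetting V ι} {Q Q' : Type*} (𝒬 : QC S Q) (𝒬' : QC S Q') where
  toFun : Option Q → Option Q'
  map_none : toFun none = none
  wt_eq : ∀ x y, toFun (some x) = some y → 𝒬'.wt y = 𝒬.wt x
  eps_eq : ∀ i x y, toFun (some x) = some y → 𝒬'.ε i y = 𝒬.ε i x
  phi_eq : ∀ i x y, toFun (some x) = some y → 𝒬'.φ i y = 𝒬.φ i x
  comm_e : ∀ i x x' y y', 𝒬.e i x = some x' → toFun (some x) = some y →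
    toFun (some x') = some y' → 𝒬'.e i y = some y'
  comm_f : ∀ i x x' y y', 𝒬.f i x = some x' → toFun (some x) = some y →
    toFun (some x') = some y' → 𝒬'.f i y = some y'

/-! ## The free `⊗`-quasi-crystal monoid -/

/-- Weight of a word: the sum of the weights of its letters. -/
def freeWt {S : QCSetting V ι} {Q : Type*} (𝒬 : QC S Q) : List Q → S.Λ
  | [] => 0
  | x :: w => 𝒬.wt x + freeWt 𝒬 w

/-- The map `ε̈_i` of the free `⊗`-quasi-crystal monoid. -/
def freeEps {S : QCSetting V ι} {Q : Type*} (𝒬 : QC S Q) (i : ι) : List Q → WithTop ℤ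
  | [] => 0
  | x :: w => max (𝒬.ε i x) (freeEps 𝒬 i w + ((-(S.pair (𝒬.wt x) i) : ℤ) : WithTop ℤ))

/-- The map `φ̈_i` of the free `⊗`-quasi-crystal monoid. -/
def freePhi {S : QCSetting V ι} {Q : Type*} (𝒬 : QC S Q) (i : ι) : List Q → WithTop ℤ
  | [] => 0
  | x :: w => max (𝒬.φ i x + ((S.pair (freeWt 𝒬 w) i : ℤ) : WithTop ℤ)) (freePhi 𝒬 i w)

/-- The operator `ë_i` of the free `⊗`-quasi-crystal monoid. -/
noncomputable def freeE {S : QCSetting V ι} {Q : Type*} (𝒬 : QC S Q) (i : ι) : List Q → Option (List Q)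
  | [] => none
  | x :: w => if freeEps 𝒬 i w ≤ 𝒬.φ i x
      then (𝒬.e i x).map (· :: w)
      else (freeE 𝒬 i w).map (x :: ·)

/-- The operator `f̈_i` of the free `⊗`-quasi-crystal monoid. -/
noncomputable def freeF {S : QCSetting V ι} {Q : Type*} (𝒬 : QC S Q) (i : ι) : List Q → Option (List Q)
  | [] => none
  | x :: w => if freeEps 𝒬 i w < 𝒬.φ i x
      then (𝒬.f i x).map (· :: w)
      else (freeF 𝒬 i w).map (x :: ·)

/-- The quasi-crystal structure of the free `⊗`-quasi-crystal monoid `F^⊗(𝒬)`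
on the free monoid `Q*`. -/
noncomputable def freeTensorQC {S : QCSetting V ι} {Q : Type*} (𝒬 : QC S Q) : QC S (FreeMonoid Q) where
  wt w := freeWt 𝒬 (FreeMonoid.toList w)
  ε i w := freeEps 𝒬 i (FreeMonoid.toList w)
  φ i w := freePhi 𝒬 i (FreeMonoid.toList w)
  e i w := (freeE 𝒬 i (FreeMonoid.toList w)).map (fun l => FreeMonoid.ofList l)
  f i w := (freeF 𝒬 i (FreeMonoid.toList w)).map (fun l => FreeMonoid.ofList l)

/-! ## The free `⊗̈`-quasi-crystal monoid -/

/-- The map `ε̈_i` of the free `⊗̈`-quasi-crystal monoid. -/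
noncomputable def qfreeEps {S : QCSetting V ι} {Q : Type*} (𝒬 : QC S Q) (i : ι) : List Q → WithTop ℤ
  | [] => 0
  | x :: w => if 0 < 𝒬.φ i x ∧ 0 < qfreeEps 𝒬 i w then ⊤
      else max (𝒬.ε i x) (qfreeEps 𝒬 i w + ((-(S.pair (𝒬.wt x) i) : ℤ) : WithTop ℤ))

/-- The map `φ̈_i` of the free `⊗̈`-quasi-crystal monoid. -/
noncomputable def qfreePhi {S : QCSetting V ι} {Q : Type*} (𝒬 : QC S Q) (i : ι) : List Q → WithTop ℤ
  | [] => 0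
  | x :: w => if 0 < 𝒬.φ i x ∧ 0 < qfreeEps 𝒬 i w then ⊤
      else max (𝒬.φ i x + ((S.pair (freeWt 𝒬 w) i : ℤ) : WithTop ℤ)) (qfreePhi 𝒬 i w)

/-- The operator `ë_i` of the free `⊗̈`-quasi-crystal monoid. -/
noncomputable def qfreeE {S : QCSetting V ι} {Q : Type*} (𝒬 : QC S Q) (i : ι) : List Q → Option (List Q)
  | [] => none
  | x :: w => if 0 < 𝒬.φ i x ∧ 0 < qfreeEps 𝒬 i w then none
      else if qfreeEps 𝒬 i w ≤ 𝒬.φ i x then (𝒬.e i x).map (· :: w)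
      else (qfreeE 𝒬 i w).map (x :: ·)

/-- The operator `f̈_i` of the free `⊗̈`-quasi-crystal monoid. -/
noncomputable def qfreeF {S : QCSetting V ι} {Q : Type*} (𝒬 : QC S Q) (i : ι) : List Q → Option (List Q)
  | [] => none
  | x :: w => if 0 < 𝒬.φ i x ∧ 0 < qfreeEps 𝒬 i w then none
      else if qfreeEps 𝒬 i w < 𝒬.φ i x then (𝒬.f i x).map (· :: w)
      else (qfreeF 𝒬 i w).map (x :: ·)

/-- The quasi-crystal structure of the free `⊗̈`-quasi-crystal monoid `F^⊗̈(𝒬)`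
on the free monoid `Q*`. -/
noncomputable def freeQTensorQC {S : QCSetting V ι} {Q : Type*} (𝒬 : QC S Q) : QC S (FreeMonoid Q) where
  wt w := freeWt 𝒬 (FreeMonoid.toList w)
  ε i w := qfreeEps 𝒬 i (FreeMonoid.toList w)
  φ i w := qfreePhi 𝒬 i (FreeMonoid.toList w)
  e i w := (qfreeE 𝒬 i (FreeMonoid.toList w)).map (fun l => FreeMonoid.ofList l)
  f i w := (qfreeF 𝒬 i (FreeMonoid.toList w)).map (fun l => FreeMonoid.ofList l)

/-! ## Connected components, plactic and hypoplactic congruences -/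

/-- Two elements are connected in the quasi-crystal graph if they are related by the
reflexive-symmetric-transitive closure of the edge relation given by the
quasi-Kashiwara operators. -/
def QC.conn {S : QCSetting V ι} {Q : Type*} (𝒬 : QC S Q) : Q → Q → Prop :=
  Relation.EqvGen (fun x y => ∃ i, 𝒬.f i x = some y ∨ 𝒬.f i y = some x ∨
    𝒬.e i x = some y ∨ 𝒬.e i y = some x)

/-- The connected component `𝒬(x)` of a quasi-crystal `𝒬` containing `x`, as a
quasi-crystal on the subtype of elements connected with `x`. -/
def QC.compQC {S : QCSetting V ι} {Q : Type*} (𝒬 : QC S Q) (x : Q) :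
    QC S {y : Q // 𝒬.conn x y} where
  wt y := 𝒬.wt y.1
  ε i y := 𝒬.ε i y.1
  φ i y := 𝒬.φ i y.1
  e i y := (𝒬.e i y.1).pmap (fun z hz => (⟨z, hz⟩ : {y : Q // 𝒬.conn x y}))
    (fun z hz => Relation.EqvGen.trans _ _ _ y.2
      (Relation.EqvGen.rel _ _ ⟨i, Or.inr (Or.inr (Or.inl hz))⟩))
  f i y := (𝒬.f i y.1).pmap (fun z hz => (⟨z, hz⟩ : {y : Q // 𝒬.conn x y}))
    (fun z hz => Relation.EqvGen.trans _ _ _ y.2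
      (Relation.EqvGen.rel _ _ ⟨i, Or.inl hz⟩))

/-- The plactic congruence: `u ≈ v` iff there is a quasi-crystal isomorphism between the
connected components of `u` and `v` in `F^⊗(𝒬)` mapping `u` to `v`. -/
def placticRel {S : QCSetting V ι} {Q : Type*} (𝒬 : QC S Q)
    (u v : FreeMonoid Q) : Prop :=
  ∃ ψ : QCHom ((freeTensorQC 𝒬).compQC u) ((freeTensorQC 𝒬).compQC v),
    Function.Bijective ψ.toFun ∧
    ψ.toFun (some ⟨u, Relation.EqvGen.refl u⟩) = some ⟨v, Relation.EqvGen.refl v⟩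

/-- The hypoplactic congruence: `u ∼̈ v` iff there is a quasi-crystal isomorphism between
the connected components of `u` and `v` in `F^⊗̈(𝒬)` mapping `u` to `v`. -/
def hypoRel {S : QCSetting V ι} {Q : Type*} (𝒬 : QC S Q)
    (u v : FreeMonoid Q) : Prop :=
  ∃ ψ : QCHom ((freeQTensorQC 𝒬).compQC u) ((freeQTensorQC 𝒬).compQC v),
    Function.Bijective ψ.toFun ∧
    ψ.toFun (some ⟨u, Relation.EqvGen.refl u⟩) = some ⟨v, Relation.EqvGen.refl v⟩

/-! ## Quasi-crystal monoids -/

/-- A monoid is equidivisible if whenever `x₁y₁ = x₂y₂` one of the factorizations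
refines the other. -/
def Equidivisible (M : Type*) [Monoid M] : Prop :=
  ∀ x₁ x₂ y₁ y₂ : M, x₁ * y₁ = x₂ * y₂ →
    ∃ z : M, (x₂ = x₁ * z ∧ y₁ = z * y₂) ∨ (x₁ = x₂ * z ∧ y₂ = z * y₁)

/-- A `⊗`-quasi-crystal monoid: a seminormal quasi-crystal structure on a monoid whose
structure maps interact with the multiplication by the tensor-product rules. -/
structure IsTensorQCMon {S : QCSetting V ι} {M : Type*} [Monoid M] (𝒬 : QC S M) : Prop where
  seminormal : 𝒬.IsSeminormal
  wt_mul : ∀ x y, 𝒬.wt (x * y) = 𝒬.wt x + 𝒬.wt y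
  eps_mul : ∀ i x y, 𝒬.ε i (x * y) =
    max (𝒬.ε i x) (𝒬.ε i y + ((-(S.pair (𝒬.wt x) i) : ℤ) : WithTop ℤ))
  phi_mul : ∀ i x y, 𝒬.φ i (x * y) =
    max (𝒬.φ i x + ((S.pair (𝒬.wt y) i : ℤ) : WithTop ℤ)) (𝒬.φ i y)
  e_mul : ∀ i x y, 𝒬.e i (x * y) =
    if 𝒬.ε i y ≤ 𝒬.φ i x then (𝒬.e i x).map (· * y) else (𝒬.e i y).map (x * ·)
  f_mul : ∀ i x y, 𝒬.f i (x * y) =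
    if 𝒬.ε i y < 𝒬.φ i x then (𝒬.f i x).map (· * y) else (𝒬.f i y).map (x * ·)

/-- A `⊗̈`-quasi-crystal monoid: a seminormal quasi-crystal structure on a monoid such
that `x ⊗̈ y ↦ x·y` induces a quasi-crystal homomorphism `M ⊗̈ M → M`. -/
def IsQTensorQCMon {S : QCSetting V ι} {M : Type*} [Monoid M] (𝒬 : QC S M) : Prop :=
  𝒬.IsSeminormal ∧
  ∃ ψ : QCHom (𝒬.qtensor 𝒬) 𝒬, ψ.toFun = Option.map (fun p => p.1 * p.2)

/-! ## The bicyclic monoid with zero `B₀` and the monoid `Z₀` -/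

/-- The bicyclic monoid `⟨−, + | (+)(−) = ε⟩`: elements are normal forms `(−)^a(+)^b`. -/
structure Bic where
  neg : ℕ
  pos : ℕ
deriving DecidableEq

instance : Mul Bic :=
  ⟨fun x y => ⟨x.neg + (y.neg - x.pos), y.pos + (x.pos - y.neg)⟩⟩

theorem Bic.mul_def (x y : Bic) :
    x * y = ⟨x.neg + (y.neg - x.pos), y.pos + (x.pos - y.neg)⟩ := rfl

instance : One Bic := ⟨⟨0, 0⟩⟩

theorem Bic.one_def : (1 : Bic) = ⟨0, 0⟩ := rfl

instance : Monoid Bic where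
  mul_assoc x y z := by
    simp only [Bic.mul_def, Bic.mk.injEq]
    omega
  one_mul x := by
    simp only [Bic.one_def, Bic.mul_def]
    cases x
    simp only [Bic.mk.injEq]
    omega
  mul_one x := by
    simp only [Bic.one_def, Bic.mul_def]
    cases x
    simp only [Bic.mk.injEq]
    omega

/-- The bicyclic monoid with a zero element adjoined,
`B₀ = ⟨0, −, + | (+)(−) = ε, 0x = x0 = 0⟩`. -/
abbrev B0 : Type := WithZero Bic

/-- The monoid `Z₀ = ⟨0, −, + | (+)(−) = 0, 0x = x0 = 0⟩`: the nonzero elements are the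
normal forms `(−)^a(+)^b`. -/
inductive Z0 : Type
  | zero : Z0
  | word : ℕ → ℕ → Z0
deriving DecidableEq

instance : Mul Z0 :=
  ⟨fun x y => match x, y with
    | Z0.zero, _ => Z0.zero
    | _, Z0.zero => Z0.zero
    | Z0.word a b, Z0.word c d =>
        if 0 < b ∧ 0 < c then Z0.zero else Z0.word (a + c) (b + d)⟩

instance : One Z0 := ⟨Z0.word 0 0⟩

instance : Zero Z0 := ⟨Z0.zero⟩

theorem Z0.one_def : (1 : Z0) = Z0.word 0 0 := rfl
theorem Z0.zero_def : (0 : Z0) = Z0.zero := rfl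
theorem Z0.zero_mul' (x : Z0) : Z0.zero * x = Z0.zero := by cases x <;> rfl
theorem Z0.mul_zero' (x : Z0) : x * Z0.zero = Z0.zero := by cases x <;> rfl
theorem Z0.word_mul_word (a b c d : ℕ) :
    Z0.word a b * Z0.word c d =
      if 0 < b ∧ 0 < c then Z0.zero else Z0.word (a + c) (b + d) := rfl

instance : MonoidWithZero Z0 where
  mul_assoc x y z := by
    cases x <;> cases y <;> cases z <;>
      simp only [Z0.zero_mul', Z0.mul_zero', Z0.word_mul_word]
    · split_ifs <;> simp_all [Z0.zero_mul', Z0.mul_zero', Z0.word_mul_word] <;>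
        split_ifs <;> simp_all <;> omega
  one_mul x := by
    cases x
    · rfl
    · simp [Z0.one_def, Z0.word_mul_word]
  mul_one x := by
    cases x
    · rfl
    · simp [Z0.one_def, Z0.word_mul_word]
  zero_mul x := by cases x <;> rfl
  mul_zero x := by cases x <;> rfl

/-! ## Signature maps -/

/-- The `i`-signature map for the tensor product `⊗`:
`sgn_i^⊗(w) = 0` if `ε̈_i(w) = +∞`, and `(−)^{ε̈_i(w)}(+)^{φ̈_i(w)}` otherwise. -/
noncomputable def tsgn {V : Type*} [NormedAddCommGroup V] [InnerProductSpace ℝ V] {ι : Type*}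
    {S : QCSetting V ι} {Q : Type*} (𝒬 : QC S Q) (i : ι) (w : FreeMonoid Q) : B0 :=
  if freeEps 𝒬 i (FreeMonoid.toList w) = ⊤ then 0
  else ↑(Bic.mk (WithTop.untopD 0 (freeEps 𝒬 i (FreeMonoid.toList w))).toNat
      (WithTop.untopD 0 (freePhi 𝒬 i (FreeMonoid.toList w))).toNat)

/-- The `i`-signature map for the quasi-tensor product `⊗̈`:
`sgn_i^⊗̈(w) = 0` if `ε̈_i(w) = +∞`, and `(−)^{ε̈_i(w)}(+)^{φ̈_i(w)}` otherwise. -/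
noncomputable def qsgn {V : Type*} [NormedAddCommGroup V] [InnerProductSpace ℝ V] {ι : Type*}
    {S : QCSetting V ι} {Q : Type*} (𝒬 : QC S Q) (i : ι) (w : FreeMonoid Q) : Z0 :=
  if qfreeEps 𝒬 i (FreeMonoid.toList w) = ⊤ then 0
  else Z0.word (WithTop.untopD 0 (qfreeEps 𝒬 i (FreeMonoid.toList w))).toNat
      (WithTop.untopD 0 (qfreePhi 𝒬 i (FreeMonoid.toList w))).toNat

/-! ## Auxiliary lemmas for the proof -/

section Aux

lemma optIter_iter_none {Q : Type*} (g : Q → Option Q) (k : ℕ) :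
    (fun o => Option.bind o g)^[k] none = none := by
  induction k with
  | zero => rfl
  | succ k ih => rw [Function.iterate_succ_apply, Option.bind_none]; exact ih

lemma optIter_one {Q : Type*} (g : Q → Option Q) (x : Q) : optIter g 1 x = g x := by
  simp [optIter]

lemma optIter_succ_some {Q : Type*} {g : Q → Option Q} {x y : Q} (h : g x = some y) (k : ℕ) :
    optIter g (k + 1) x = optIter g k y := by
  unfold optIter
  rw [Function.iterate_succ_apply]
  simp [h]

lemma optIter_isSome_of_le {Q : Type*} {g : Q → Option Q} {x : Q} {j k : ℕ} (hjk : j ≤ k)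
    (hk : (optIter g k x).isSome) : (optIter g j x).isSome := by
  obtain ⟨m, rfl⟩ := Nat.exists_eq_add_of_le hjk
  by_contra hj
  rw [Option.not_isSome_iff_eq_none] at hj
  unfold optIter at *
  rw [add_comm, Function.iterate_add_apply, hj, optIter_iter_none] at hk
  simp at hk

lemma isGreatest_optIter {P : Type*} (g : P → Option P) (μ : P → WithTop ℤ) (Inv : P → Prop)
    (hsome : ∀ p, Inv p → ((g p).isSome ↔ 0 < μ p))
    (hstep : ∀ p q, Inv p → g p = some q → Inv q ∧ μ q + 1 = μ p) :
    ∀ n : ℕ, ∀ p, Inv p → μ p = ((n : ℤ) : WithTop ℤ) →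
      IsGreatest {k : ℕ | (optIter g k p).isSome} n := by
  intro n
  induction n with
  | zero =>
    intro p hp hμ
    constructor
    · show (optIter g 0 p).isSome
      simp [optIter]
    · intro k hk
      by_contra hcon
      push_neg at hcon
      have h1 : (optIter g 1 p).isSome := optIter_isSome_of_le hcon hk
      rw [optIter_one] at h1
      have := (hsome p hp).mp h1
      rw [hμ] at this
      simp at this
  | succ n ih =>
    intro p hp hμ
    have hpos : 0 < μ p := by
      rw [hμ]
      exact_mod_cast Int.natCast_pos.mpr (Nat.succ_pos n)
    have hs : (g p).isSome := (hsome p hp).mpr hpos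
    obtain ⟨q, hq⟩ := Option.isSome_iff_exists.mp hs
    obtain ⟨hInvq, hμq⟩ := hstep p q hp hq
    have hμq' : μ q = ((n : ℤ) : WithTop ℤ) := by
      obtain ⟨b, hb⟩ := WithTop.ne_top_iff_exists.mp (by
        intro ht
        rw [ht, top_add] at hμq
        rw [hμ] at hμq
        exact (WithTop.coe_ne_top hμq.symm).elim : μ q ≠ ⊤)
      rw [← hb] at hμq ⊢
      rw [hμ] at hμq
      norm_cast at hμq ⊢
      omega
    have hg := ih q hInvq hμq'
    constructor
    · show (optIter g (n + 1) p).isSome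
      rw [optIter_succ_some hq]
      exact hg.1
    · intro k hk
      match k with
      | 0 => exact Nat.zero_le _
      | Nat.succ j =>
        have hj : (optIter g j q).isSome := by
          rw [← optIter_succ_some hq]
          exact hk
        exact Nat.succ_le_succ (hg.2 hj)

variable {V : Type*} [NormedAddCommGroup V] [InnerProductSpace ℝ V] {ι : Type*}
  {S : QCSetting V ι} {Q : Type*} {𝒬 : QC S Q}

lemma aux_eps_ne_top_of_e (hsn : 𝒬.IsSeminormal) {i : ι} {x y : Q} (hxy : 𝒬.e i x = some y) :
    𝒬.ε i x ≠ ⊤ := fun ht => by simp [hsn.e_of_top i x ht] at hxy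

lemma aux_eps_ne_top_of_f (hsn : 𝒬.IsSeminormal) {i : ι} {x y : Q} (hxy : 𝒬.f i x = some y) :
    𝒬.ε i x ≠ ⊤ := fun ht => by simp [hsn.f_of_top i x ht] at hxy

lemma aux_e_isSome_iff (hsn : 𝒬.IsSeminormal) {i : ι} {x : Q} (hx : 𝒬.ε i x ≠ ⊤) :
    (𝒬.e i x).isSome ↔ 0 < 𝒬.ε i x := by
  obtain ⟨n, hn, hmem, hub⟩ := hsn.eps_spec i x hx
  constructor
  · intro hs
    have h1 : 1 ∈ {k : ℕ | (optIter (𝒬.e i) k x).isSome} := by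
      show (optIter (𝒬.e i) 1 x).isSome
      rw [optIter_one]; exact hs
    have h2 := hub h1
    rw [hn]
    exact_mod_cast Int.natCast_pos.mpr h2
  · intro hpos
    have hn0 : 0 < n := by
      rw [hn] at hpos
      exact_mod_cast hpos
    have := optIter_isSome_of_le hn0 hmem
    rwa [optIter_one] at this

lemma aux_f_isSome_iff (hsn : 𝒬.IsSeminormal) {i : ι} {x : Q} (hx : 𝒬.ε i x ≠ ⊤) :
    (𝒬.f i x).isSome ↔ 0 < 𝒬.φ i x := by
  obtain ⟨n, hn, hmem, hub⟩ := hsn.phi_spec i x hx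
  constructor
  · intro hs
    have h1 : 1 ∈ {k : ℕ | (optIter (𝒬.f i) k x).isSome} := by
      show (optIter (𝒬.f i) 1 x).isSome
      rw [optIter_one]; exact hs
    have h2 := hub h1
    rw [hn]
    exact_mod_cast Int.natCast_pos.mpr h2
  · intro hpos
    have hn0 : 0 < n := by
      rw [hn] at hpos
      exact_mod_cast hpos
    have := optIter_isSome_of_le hn0 hmem
    rwa [optIter_one] at this

lemma aux_eps_nonneg (hsn : 𝒬.IsSeminormal) {i : ι} {x : Q} (hx : 𝒬.ε i x ≠ ⊤) :
    0 ≤ 𝒬.ε i x := by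
  obtain ⟨n, hn, _⟩ := hsn.eps_spec i x hx
  rw [hn]
  exact_mod_cast Int.natCast_nonneg n

lemma aux_phi_nonneg (hsn : 𝒬.IsSeminormal) {i : ι} {x : Q} (hx : 𝒬.ε i x ≠ ⊤) :
    0 ≤ 𝒬.φ i x := by
  obtain ⟨n, hn, _⟩ := hsn.phi_spec i x hx
  rw [hn]
  exact_mod_cast Int.natCast_nonneg n

lemma aux_phi_ne_top (hsn : 𝒬.IsSeminormal) {i : ι} {x : Q} (hx : 𝒬.ε i x ≠ ⊤) :
    𝒬.φ i x ≠ ⊤ := by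
  obtain ⟨a, ha⟩ := WithTop.ne_top_iff_exists.mp hx
  rw [hsn.phi_eq, ← ha, ← WithTop.coe_add]
  exact WithTop.coe_ne_top

lemma aux_eps_e_succ (hsn : 𝒬.IsSeminormal) {i : ι} {x y : Q} (hxy : 𝒬.e i x = some y) :
    𝒬.ε i y + 1 = 𝒬.ε i x := by
  have hx := aux_eps_ne_top_of_e hsn hxy
  have hfy : 𝒬.f i y = some x := (hsn.e_iff_f i x y).mp hxy
  have hy : 𝒬.ε i y ≠ ⊤ := aux_eps_ne_top_of_f hsn hfy
  obtain ⟨n, hn, hmemn, hubn⟩ := hsn.eps_spec i x hx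
  obtain ⟨m, hm, hmemm, hubm⟩ := hsn.eps_spec i y hy
  have hnm : n = m + 1 := by
    have h1 : m + 1 ≤ n := by
      refine hubn ?_
      show (optIter (𝒬.e i) (m + 1) x).isSome
      rw [optIter_succ_some hxy]
      exact hmemm
    have hn1 : 1 ≤ n := by
      refine hubn ?_
      show (optIter (𝒬.e i) 1 x).isSome
      rw [optIter_one]
      simp [hxy]
    have h2 : n - 1 ≤ m := by
      refine hubm ?_
      show (optIter (𝒬.e i) (n - 1) y).isSome
      rw [← optIter_succ_some hxy]
      have : n - 1 + 1 = n := by omega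
      rw [this]
      exact hmemn
    omega
  rw [hn, hm, hnm]
  norm_cast

lemma aux_pair_add (S : QCSetting V ι) (u v : S.Λ) (i : ι) :
    S.pair (u + v) i = S.pair u i + S.pair v i := by
  have hc : ((S.pair (u + v) i : ℤ) : ℝ) = ((S.pair u i + S.pair v i : ℤ) : ℝ) := by
    push_cast
    rw [S.pair_spec, S.pair_spec, S.pair_spec]
    have huv : ((u + v : S.Λ) : V) = (u : V) + (v : V) := rfl
    rw [huv, inner_add_left]
    ring
  exact_mod_cast hc

lemma aux_inner_simple_ne_zero (S : QCSetting V ι) (i : ι) :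
    (inner ℝ (S.simple i) (S.simple i) : ℝ) ≠ 0 := by
  rw [inner_self_ne_zero]
  intro h0
  exact S.zero_not_mem (h0 ▸ S.simple_mem i)

lemma aux_pair_wt_e (hsn : 𝒬.IsSeminormal) {i : ι} {x y : Q} (hxy : 𝒬.e i x = some y) :
    S.pair (𝒬.wt y) i = S.pair (𝒬.wt x) i + 2 := by
  have hw := hsn.wt_e i x y hxy
  have hne := aux_inner_simple_ne_zero S i
  have hc : ((S.pair (𝒬.wt y) i : ℤ) : ℝ) = ((S.pair (𝒬.wt x) i + 2 : ℤ) : ℝ) := by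
    push_cast
    rw [S.pair_spec, S.pair_spec, hw, inner_add_left]
    field_simp
  exact_mod_cast hc

lemma aux_phi_e_succ (hsn : 𝒬.IsSeminormal) {i : ι} {x y : Q} (hxy : 𝒬.e i x = some y) :
    𝒬.φ i y = 𝒬.φ i x + 1 := by
  have hx := aux_eps_ne_top_of_e hsn hxy
  have hy : 𝒬.ε i y ≠ ⊤ := aux_eps_ne_top_of_f hsn ((hsn.e_iff_f i x y).mp hxy)
  obtain ⟨m, hm⟩ := WithTop.ne_top_iff_exists.mp hy
  have hεx : 𝒬.ε i x = ((m + 1 : ℤ) : WithTop ℤ) := by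
    rw [← aux_eps_e_succ hsn hxy, ← hm]
    norm_cast
  rw [hsn.phi_eq i y, hsn.phi_eq i x, aux_pair_wt_e hsn hxy, hεx, ← hm]
  norm_cast
  omega

lemma aux_lt_add_one_iff {u v : WithTop ℤ} (hv : v ≠ ⊤) : u < v + 1 ↔ u ≤ v := by
  obtain ⟨b, hb⟩ := WithTop.ne_top_iff_exists.mp hv
  induction u using WithTop.recTopCoe with
  | top =>
    simp only [← hb, ← WithTop.coe_one, ← WithTop.coe_add]
    simp [WithTop.top_le_iff]
  | coe a =>
    rw [← hb]
    norm_cast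
    omega

lemma aux_lt_succ_self {v : WithTop ℤ} (hv : v ≠ ⊤) : v < v + 1 :=
  (aux_lt_add_one_iff hv).mpr le_rfl

end Aux

lemma aux_max_arith (u v : WithTop ℤ) (a b : ℤ) :
    max (u + (a : WithTop ℤ) + (b : WithTop ℤ)) (v + (b : WithTop ℤ)) =
      max u (v + ((-a : ℤ) : WithTop ℤ)) + ((a + b : ℤ) : WithTop ℤ) := by
  induction u using WithTop.recTopCoe with
  | top => simp [top_add]
  | coe c =>
    induction v using WithTop.recTopCoe with
    | top => simp [top_add]
    | coe d =>
      norm_cast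
      omega

theorem tensor_isSeminormal' {V : Type*} [NormedAddCommGroup V] [InnerProductSpace ℝ V]
    {ι : Type*} {S : QCSetting V ι} {Q Q' : Type*} (𝒬 : QC S Q) (𝒬' : QC S Q')
    (h : 𝒬.IsSeminormal) (h' : 𝒬'.IsSeminormal) :
    (𝒬.tensor 𝒬').IsSeminormal := by
  constructor
  · -- phi_eq
    intro i p
    simp only [QC.tensor]
    rw [aux_pair_add, h.phi_eq i p.1, h'.phi_eq i p.2]
    exact aux_max_arith _ _ _ _
  · -- wt_e
    intro i p q hq
    simp only [QC.tensor] at hq ⊢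
    split_ifs at hq with hc
    · obtain ⟨z, hz, rfl⟩ := Option.map_eq_some_iff.mp hq
      simp only [AddSubgroup.coe_add]
      rw [h.wt_e i p.1 z hz]
      abel
    · obtain ⟨z, hz, rfl⟩ := Option.map_eq_some_iff.mp hq
      simp only [AddSubgroup.coe_add]
      rw [h'.wt_e i p.2 z hz]
      abel
  · -- wt_f
    intro i p q hq
    simp only [QC.tensor] at hq ⊢
    split_ifs at hq with hc
    · obtain ⟨z, hz, rfl⟩ := Option.map_eq_some_iff.mp hq
      simp only [AddSubgroup.coe_add]
      rw [h.wt_f i p.1 z hz]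
      abel
    · obtain ⟨z, hz, rfl⟩ := Option.map_eq_some_iff.mp hq
      simp only [AddSubgroup.coe_add]
      rw [h'.wt_f i p.2 z hz]
      abel
  · -- e_iff_f
    intro i p q
    constructor
    · intro hq
      simp only [QC.tensor] at hq ⊢
      split_ifs at hq with hc
      · obtain ⟨z, hz, rfl⟩ := Option.map_eq_some_iff.mp hq
        have hεx := aux_eps_ne_top_of_e h hz
        have hφx := aux_phi_ne_top h hεx
        have hφz : 𝒬.φ i z = 𝒬.φ i p.1 + 1 := aux_phi_e_succ h hz
        have hcond : 𝒬'.ε i p.2 < 𝒬.φ i z := by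
          rw [hφz, aux_lt_add_one_iff hφx]
          exact hc
        rw [if_pos hcond, (h.e_iff_f i p.1 z).mp hz]
        rfl
      · push_neg at hc
        obtain ⟨z, hz, rfl⟩ := Option.map_eq_some_iff.mp hq
        have hεz : 𝒬'.ε i z ≠ ⊤ :=
          aux_eps_ne_top_of_f h' ((h'.e_iff_f i p.2 z).mp hz)
        have hcond : ¬ (𝒬'.ε i z < 𝒬.φ i p.1) := by
          rw [not_lt]
          have h1 := aux_eps_e_succ h' hz
          rw [← aux_lt_add_one_iff hεz, h1]
          exact hc
        rw [if_neg hcond, (h'.e_iff_f i p.2 z).mp hz]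
        rfl
    · intro hq
      simp only [QC.tensor] at hq ⊢
      split_ifs at hq with hc
      · obtain ⟨z, hz, rfl⟩ := Option.map_eq_some_iff.mp hq
        have hez : 𝒬.e i z = some q.1 := (h.e_iff_f i z q.1).mpr hz
        have hεz := aux_eps_ne_top_of_e h hez
        have hφz := aux_phi_ne_top h hεz
        have hφq : 𝒬.φ i q.1 = 𝒬.φ i z + 1 := aux_phi_e_succ h hez
        have hcond : 𝒬'.ε i q.2 ≤ 𝒬.φ i z := by
          rw [← aux_lt_add_one_iff hφz, ← hφq]
          exact hc
        rw [if_pos hcond, hez]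
        rfl
      · push_neg at hc
        obtain ⟨z, hz, rfl⟩ := Option.map_eq_some_iff.mp hq
        have hez : 𝒬'.e i z = some q.2 := (h'.e_iff_f i z q.2).mpr hz
        have hεq2 : 𝒬'.ε i q.2 ≠ ⊤ := aux_eps_ne_top_of_f h' hz
        have hcond : ¬ (𝒬'.ε i z ≤ 𝒬.φ i q.1) := by
          rw [not_le, ← aux_eps_e_succ h' hez]
          calc 𝒬.φ i q.1 ≤ 𝒬'.ε i q.2 := hc
          _ < 𝒬'.ε i q.2 + 1 := aux_lt_succ_self hεq2
        rw [if_neg hcond, hez]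
        rfl
  · -- e_of_top
    intro i p ht
    simp only [QC.tensor] at ht ⊢
    rw [max_eq_top] at ht
    split_ifs with hc
    · have hx : 𝒬.ε i p.1 = ⊤ := by
        rcases ht with ht | ht
        · exact ht
        · rcases WithTop.add_eq_top.mp ht with ht' | ht'
          · rw [ht'] at hc
            have hφ : 𝒬.φ i p.1 = ⊤ := top_le_iff.mp hc
            by_contra hxx
            exact aux_phi_ne_top h hxx hφ
          · exact absurd ht' WithTop.coe_ne_top
      rw [h.e_of_top i p.1 hx]
      rfl
    · push_neg at hc
      have hy : 𝒬'.ε i p.2 = ⊤ := by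
        rcases ht with ht | ht
        · exfalso
          have hφ : 𝒬.φ i p.1 = ⊤ := by rw [h.phi_eq i p.1, ht, top_add]
          rw [hφ] at hc
          exact not_top_lt hc
        · rcases WithTop.add_eq_top.mp ht with ht' | ht'
          · exact ht'
          · exact absurd ht' WithTop.coe_ne_top
      rw [h'.e_of_top i p.2 hy]
      rfl
  · -- f_of_top
    intro i p ht
    simp only [QC.tensor] at ht ⊢
    rw [max_eq_top] at ht
    split_ifs with hc
    · have hx : 𝒬.ε i p.1 = ⊤ := by
        rcases ht with ht | ht
        · exact ht
        · rcases WithTop.add_eq_top.mp ht with ht' | ht'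
          · rw [ht'] at hc
            exact absurd hc not_top_lt
          · exact absurd ht' WithTop.coe_ne_top
      rw [h.f_of_top i p.1 hx]
      rfl
    · push_neg at hc
      have hy : 𝒬'.ε i p.2 = ⊤ := by
        rcases ht with ht | ht
        · have hφ : 𝒬.φ i p.1 = ⊤ := by rw [h.phi_eq i p.1, ht, top_add]
          rw [hφ] at hc
          exact top_le_iff.mp hc
        · rcases WithTop.add_eq_top.mp ht with ht' | ht'
          · exact ht'
          · exact absurd ht' WithTop.coe_ne_top
      rw [h'.f_of_top i p.2 hy]
      rfl
  · -- eps_spec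
    intro i p hne
    have hx : 𝒬.ε i p.1 ≠ ⊤ := by
      intro hve
      exact hne (max_eq_top.mpr (Or.inl hve))
    have hy : 𝒬'.ε i p.2 ≠ ⊤ := by
      intro hve
      exact hne (max_eq_top.mpr (Or.inr (WithTop.add_eq_top.mpr (Or.inl hve))))
    have hsome : ∀ q : Q × Q', (𝒬.ε i q.1 ≠ ⊤ ∧ 𝒬'.ε i q.2 ≠ ⊤) →
        (((𝒬.tensor 𝒬').e i q).isSome ↔ 0 < (𝒬.tensor 𝒬').ε i q) := by
      rintro q ⟨hu, hv⟩
      obtain ⟨a, ha⟩ := WithTop.ne_top_iff_exists.mp hu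
      obtain ⟨b, hb⟩ := WithTop.ne_top_iff_exists.mp hv
      have ha0 : (0 : ℤ) ≤ a := by
        have := aux_eps_nonneg h hu
        rw [← ha] at this
        exact_mod_cast this
      have hφ : 𝒬.φ i q.1 = ((a + S.pair (𝒬.wt q.1) i : ℤ) : WithTop ℤ) := by
        rw [h.phi_eq i q.1, ← ha]
        norm_cast
      simp only [QC.tensor]
      split_ifs with hc
      · rw [Option.isSome_map, aux_e_isSome_iff h hu, ← ha, ← hb]
        rw [← hb, hφ] at hc
        have hc' : b ≤ a + S.pair (𝒬.wt q.1) i := by exact_mod_cast hc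
        constructor
        · intro h1
          have h1' : (0:ℤ) < a := by exact_mod_cast h1
          have : (0:ℤ) < max a (b + -(S.pair (𝒬.wt q.1) i)) := by omega
          exact_mod_cast this
        · intro h1
          have h1' : (0:ℤ) < max a (b + -(S.pair (𝒬.wt q.1) i)) := by exact_mod_cast h1
          have : (0:ℤ) < a := by omega
          exact_mod_cast this
      · push_neg at hc
        rw [Option.isSome_map, aux_e_isSome_iff h' hv, ← ha, ← hb]
        rw [← hb, hφ] at hc
        have hc' : a + S.pair (𝒬.wt q.1) i < b := by exact_mod_cast hc
        have hac0 : (0:ℤ) ≤ a + S.pair (𝒬.wt q.1) i := by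
          have := aux_phi_nonneg h hu
          rw [hφ] at this
          exact_mod_cast this
        constructor
        · intro h1
          have h1' : (0:ℤ) < b := by exact_mod_cast h1
          have : (0:ℤ) < max a (b + -(S.pair (𝒬.wt q.1) i)) := by omega
          exact_mod_cast this
        · intro h1
          have : (0:ℤ) < b := by omega
          exact_mod_cast this
    have hstep : ∀ q r : Q × Q', (𝒬.ε i q.1 ≠ ⊤ ∧ 𝒬'.ε i q.2 ≠ ⊤) →
        (𝒬.tensor 𝒬').e i q = some r →
        (𝒬.ε i r.1 ≠ ⊤ ∧ 𝒬'.ε i r.2 ≠ ⊤) ∧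
          (𝒬.tensor 𝒬').ε i r + 1 = (𝒬.tensor 𝒬').ε i q := by
      rintro q r ⟨hu, hv⟩ hqr
      obtain ⟨a, ha⟩ := WithTop.ne_top_iff_exists.mp hu
      obtain ⟨b, hb⟩ := WithTop.ne_top_iff_exists.mp hv
      have ha0 : (0 : ℤ) ≤ a := by
        have := aux_eps_nonneg h hu
        rw [← ha] at this
        exact_mod_cast this
      simp only [QC.tensor] at hqr ⊢
      split_ifs at hqr with hc
      · obtain ⟨z, hz, rfl⟩ := Option.map_eq_some_iff.mp hqr
        dsimp only
        have hz' : 𝒬.ε i z ≠ ⊤ := aux_eps_ne_top_of_f h ((h.e_iff_f i q.1 z).mp hz)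
        refine ⟨⟨hz', hv⟩, ?_⟩
        obtain ⟨a', ha'⟩ := WithTop.ne_top_iff_exists.mp hz'
        have haa : a' + 1 = a := by
          have h1 := aux_eps_e_succ h hz
          rw [← ha', ← ha] at h1
          exact_mod_cast h1
        have hpz := aux_pair_wt_e h hz
        have hc' : b ≤ a + S.pair (𝒬.wt q.1) i := by
          rw [← hb, h.phi_eq i q.1, ← ha] at hc
          exact_mod_cast hc
        rw [← ha, ← hb, ← ha', hpz]
        norm_cast
        omega
      · push_neg at hc
        obtain ⟨z, hz, rfl⟩ := Option.map_eq_some_iff.mp hqr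
        dsimp only
        have hz' : 𝒬'.ε i z ≠ ⊤ := aux_eps_ne_top_of_f h' ((h'.e_iff_f i q.2 z).mp hz)
        refine ⟨⟨hu, hz'⟩, ?_⟩
        obtain ⟨b', hb'⟩ := WithTop.ne_top_iff_exists.mp hz'
        have hbb : b' + 1 = b := by
          have h1 := aux_eps_e_succ h' hz
          rw [← hb', ← hb] at h1
          exact_mod_cast h1
        have hc' : a + S.pair (𝒬.wt q.1) i < b := by
          rw [← hb, h.phi_eq i q.1, ← ha] at hc
          exact_mod_cast hc
        rw [← ha, ← hb, ← hb']
        norm_cast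
        omega
    obtain ⟨m, hm⟩ := WithTop.ne_top_iff_exists.mp hne
    have hm0 : (0:ℤ) ≤ m := by
      have h0 : (0 : WithTop ℤ) ≤ (𝒬.tensor 𝒬').ε i p :=
        le_trans (aux_eps_nonneg h hx) (le_max_left _ _)
      rw [← hm] at h0
      exact_mod_cast h0
    have hmv : (𝒬.tensor 𝒬').ε i p = ((m.toNat : ℤ) : WithTop ℤ) := by
      rw [← hm]
      norm_cast
      omega
    exact ⟨m.toNat, hmv,
      isGreatest_optIter ((𝒬.tensor 𝒬').e i) ((𝒬.tensor 𝒬').ε i)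
        (fun q => 𝒬.ε i q.1 ≠ ⊤ ∧ 𝒬'.ε i q.2 ≠ ⊤) hsome hstep m.toNat p ⟨hx, hy⟩ hmv⟩
  · -- phi_spec
    intro i p hne
    have hx : 𝒬.ε i p.1 ≠ ⊤ := by
      intro hve
      exact hne (max_eq_top.mpr (Or.inl hve))
    have hy : 𝒬'.ε i p.2 ≠ ⊤ := by
      intro hve
      exact hne (max_eq_top.mpr (Or.inr (WithTop.add_eq_top.mpr (Or.inl hve))))
    have hsome : ∀ q : Q × Q', (𝒬.ε i q.1 ≠ ⊤ ∧ 𝒬'.ε i q.2 ≠ ⊤) →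
        (((𝒬.tensor 𝒬').f i q).isSome ↔ 0 < (𝒬.tensor 𝒬').φ i q) := by
      rintro q ⟨hu, hv⟩
      obtain ⟨a, ha⟩ := WithTop.ne_top_iff_exists.mp hu
      obtain ⟨b, hb⟩ := WithTop.ne_top_iff_exists.mp hv
      have hb0 : (0 : ℤ) ≤ b := by
        have := aux_eps_nonneg h' hv
        rw [← hb] at this
        exact_mod_cast this
      have hφ : 𝒬.φ i q.1 = ((a + S.pair (𝒬.wt q.1) i : ℤ) : WithTop ℤ) := by
        rw [h.phi_eq i q.1, ← ha]
        norm_cast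
      have hφ' : 𝒬'.φ i q.2 = ((b + S.pair (𝒬'.wt q.2) i : ℤ) : WithTop ℤ) := by
        rw [h'.phi_eq i q.2, ← hb]
        norm_cast
      have hbd0 : (0:ℤ) ≤ b + S.pair (𝒬'.wt q.2) i := by
        have := aux_phi_nonneg h' hv
        rw [hφ'] at this
        exact_mod_cast this
      simp only [QC.tensor]
      split_ifs with hc
      · rw [Option.isSome_map, aux_f_isSome_iff h hu, hφ, hφ']
        rw [← hb, hφ] at hc
        have hc' : b < a + S.pair (𝒬.wt q.1) i := by exact_mod_cast hc
        constructor
        · intro h1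
          have h1' : (0:ℤ) < a + S.pair (𝒬.wt q.1) i := by exact_mod_cast h1
          have : (0:ℤ) < max (a + S.pair (𝒬.wt q.1) i + S.pair (𝒬'.wt q.2) i)
              (b + S.pair (𝒬'.wt q.2) i) := by omega
          exact_mod_cast this
        · intro _
          have : (0:ℤ) < a + S.pair (𝒬.wt q.1) i := by omega
          exact_mod_cast this
      · push_neg at hc
        rw [Option.isSome_map, aux_f_isSome_iff h' hv, hφ, hφ']
        rw [← hb, hφ] at hc
        have hc' : a + S.pair (𝒬.wt q.1) i ≤ b := by exact_mod_cast hc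
        constructor
        · intro h1
          have h1' : (0:ℤ) < b + S.pair (𝒬'.wt q.2) i := by exact_mod_cast h1
          have : (0:ℤ) < max (a + S.pair (𝒬.wt q.1) i + S.pair (𝒬'.wt q.2) i)
              (b + S.pair (𝒬'.wt q.2) i) := by omega
          exact_mod_cast this
        · intro h1
          have h1' : (0:ℤ) < max (a + S.pair (𝒬.wt q.1) i + S.pair (𝒬'.wt q.2) i)
              (b + S.pair (𝒬'.wt q.2) i) := by exact_mod_cast h1
          have : (0:ℤ) < b + S.pair (𝒬'.wt q.2) i := by omega
          exact_mod_cast this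
    have hstep : ∀ q r : Q × Q', (𝒬.ε i q.1 ≠ ⊤ ∧ 𝒬'.ε i q.2 ≠ ⊤) →
        (𝒬.tensor 𝒬').f i q = some r →
        (𝒬.ε i r.1 ≠ ⊤ ∧ 𝒬'.ε i r.2 ≠ ⊤) ∧
          (𝒬.tensor 𝒬').φ i r + 1 = (𝒬.tensor 𝒬').φ i q := by
      rintro q r ⟨hu, hv⟩ hqr
      obtain ⟨a, ha⟩ := WithTop.ne_top_iff_exists.mp hu
      obtain ⟨b, hb⟩ := WithTop.ne_top_iff_exists.mp hv
      simp only [QC.tensor] at hqr ⊢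
      split_ifs at hqr with hc
      · obtain ⟨z, hz, rfl⟩ := Option.map_eq_some_iff.mp hqr
        dsimp only
        have hez : 𝒬.e i z = some q.1 := (h.e_iff_f i z q.1).mpr hz
        have hz' : 𝒬.ε i z ≠ ⊤ := aux_eps_ne_top_of_e h hez
        refine ⟨⟨hz', hv⟩, ?_⟩
        obtain ⟨a', ha'⟩ := WithTop.ne_top_iff_exists.mp hz'
        have haa : a + 1 = a' := by
          have h1 := aux_eps_e_succ h hez
          rw [← ha', ← ha] at h1
          exact_mod_cast h1
        have hpz : S.pair (𝒬.wt q.1) i = S.pair (𝒬.wt z) i + 2 := aux_pair_wt_e h hez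
        have hc' : b < a + S.pair (𝒬.wt q.1) i := by
          rw [← hb, h.phi_eq i q.1, ← ha] at hc
          exact_mod_cast hc
        rw [hpz] at hc'
        rw [h.phi_eq i z, h.phi_eq i q.1, h'.phi_eq i q.2, ← ha, ← ha', ← hb, hpz]
        norm_cast
        omega
      · push_neg at hc
        obtain ⟨z, hz, rfl⟩ := Option.map_eq_some_iff.mp hqr
        dsimp only
        have hez : 𝒬'.e i z = some q.2 := (h'.e_iff_f i z q.2).mpr hz
        have hz' : 𝒬'.ε i z ≠ ⊤ := aux_eps_ne_top_of_e h' hez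
        refine ⟨⟨hu, hz'⟩, ?_⟩
        obtain ⟨b', hb'⟩ := WithTop.ne_top_iff_exists.mp hz'
        have hbb : b + 1 = b' := by
          have h1 := aux_eps_e_succ h' hez
          rw [← hb', ← hb] at h1
          exact_mod_cast h1
        have hpz : S.pair (𝒬'.wt q.2) i = S.pair (𝒬'.wt z) i + 2 := aux_pair_wt_e h' hez
        have hc' : a + S.pair (𝒬.wt q.1) i ≤ b := by
          rw [← hb, h.phi_eq i q.1, ← ha] at hc
          exact_mod_cast hc
        rw [h.phi_eq i q.1, h'.phi_eq i z, h'.phi_eq i q.2, ← ha, ← hb', ← hb, hpz]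
        norm_cast
        omega
    have hφtne : (𝒬.tensor 𝒬').φ i p ≠ ⊤ := by
      have h1 := aux_phi_ne_top h hx
      have h2 := aux_phi_ne_top h' hy
      obtain ⟨c1, hc1⟩ := WithTop.ne_top_iff_exists.mp h1
      obtain ⟨c2, hc2⟩ := WithTop.ne_top_iff_exists.mp h2
      show max (𝒬.φ i p.1 + _) (𝒬'.φ i p.2) ≠ ⊤
      rw [← hc1, ← hc2, ← WithTop.coe_add, ← WithTop.coe_max]
      exact WithTop.coe_ne_top
    obtain ⟨m, hm⟩ := WithTop.ne_top_iff_exists.mp hφtne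
    have hm0 : (0:ℤ) ≤ m := by
      have h0 : (0 : WithTop ℤ) ≤ (𝒬.tensor 𝒬').φ i p :=
        le_trans (aux_phi_nonneg h' hy) (le_max_right _ _)
      rw [← hm] at h0
      exact_mod_cast h0
    have hmv : (𝒬.tensor 𝒬').φ i p = ((m.toNat : ℤ) : WithTop ℤ) := by
      rw [← hm]
      norm_cast
      omega
    exact ⟨m.toNat, hmv,
      isGreatest_optIter ((𝒬.tensor 𝒬').f i) ((𝒬.tensor 𝒬').φ i)
        (fun q => 𝒬.ε i q.1 ≠ ⊤ ∧ 𝒬'.ε i q.2 ≠ ⊤) hsome hstep m.toNat p ⟨hx, hy⟩ hmv⟩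

/-- The tensor product of two seminormal quasi-crystals of type `Φ`
satisfies all the axioms of a seminormal quasi-crystal of type `Φ`. -/
theorem tensor_isSeminormal {V : Type*} [NormedAddCommGroup V] [InnerProductSpace ℝ V]
    {ι : Type*} {S : QCSetting V ι} {Q Q' : Type*} (𝒬 : QC S Q) (𝒬' : QC S Q')
    (h : 𝒬.IsSeminormal) (h' : 𝒬'.IsSeminormal) :
    (𝒬.tensor 𝒬').IsSeminormal := by
  exact tensor_isSeminormal' 𝒬 𝒬' h h'
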